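/- Let H be a subgroup of SO(3) of order 2, and let π : SU(2) → SO(3) be the standard double cover. Then the preimage π⁻¹(H) is a cyclic subgroup of SU(2) of order 4. -/

import Mathlib

set_option synthInstance.maxHeartbeats 800000
set_option maxHeartbeats 1600000


open Metric

/-- Let `π : SU(2) → K` be a surjective homomorphism from the unit quaternions whose
kernel is exactly `{1, -1}` (such as the standard double cover `SU(2) → SO(3)`),
and let `H` be a subgroup of `K` of order 2.  Then the preimage `π⁻¹(H)` is a
cyclic subgroup of SU(2) of order 4. -/
theorem stmt13 (K : Type*) [Group K]
    (π : (sphere (0 : Quaternion ℝ) 1) →* K)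
    (hsurj : Function.Surjective π)
    (hker : ∀ g, π g = 1 ↔ ((g : Quaternion ℝ) = 1 ∨ (g : Quaternion ℝ) = -1))
    (H : Subgroup K) (hH : Nat.card H = 2) :
    IsCyclic (H.comap π) ∧ Nat.card (H.comap π) = 4 := by
  have hker' : ∀ g : sphere (0 : Quaternion ℝ) 1, π g = 1 ↔ (g = 1 ∨ g = -1) := by
    intro g
    rw [hker g]
    constructor
    · rintro (h | h)
      · exact Or.inl (Subtype.ext h)
      · exact Or.inr (Subtype.ext h)
    · rintro (rfl | rfl)
      · exact Or.inl rfl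
      · exact Or.inr rfl
  -- get the nontrivial element of H
  obtain ⟨a, ha, hauniq⟩ := (Nat.card_eq_two_iff' (1 : H)).1 hH
  have hHmem : ∀ x : H, x = 1 ∨ x = a := by
    intro x
    by_cases hx : x = 1
    · exact Or.inl hx
    · exact Or.inr (hauniq x hx)
  set k : K := (a : K) with hk
  have hk1 : k ≠ 1 := fun h => ha (Subtype.ext h)
  have hkH : k ∈ H := a.2
  -- lift k to g
  obtain ⟨g, hg⟩ := hsurj k
  -- g ≠ ±1
  have hgne : ¬ (g = 1 ∨ g = -1) := by
    intro h
    exact hk1 (hg ▸ (hker' g).2 h)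
  -- k² = 1
  have hk2 : k * k = 1 := by
    rcases hHmem (a * a) with h | h
    · exact congrArg Subtype.val h
    · exact absurd (mul_left_cancel (a := a) (by rw [mul_one]; exact h.symm)).symm ha
  -- g² = -1
  have hg2 : g * g = -1 := by
    have h1 : π (g * g) = 1 := by rw [map_mul, hg, hk2]
    rcases (hker' _).1 h1 with h | h
    · have h2 : (g : Quaternion ℝ) * g = 1 := congrArg Subtype.val h
      rcases mul_self_eq_one_iff.1 h2 with h' | h'
      · exact absurd (Or.inl (Subtype.ext h')) hgne
      · exact absurd (Or.inr (Subtype.ext h')) hgne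
    · exact h
  have hneg1 : ((-1 : sphere (0 : Quaternion ℝ) 1) : Quaternion ℝ) = -1 := rfl
  have hg4 : g ^ 4 = 1 := by
    have h1 : g ^ 4 = (g * g) * (g * g) := by
      rw [show 4 = 2 + 2 from rfl, pow_add, sq]
    rw [h1, hg2]
    exact (neg_mul_neg 1 1).trans (one_mul 1)
  have hg2ne : g ^ 2 ≠ 1 := by
    rw [sq, hg2]
    intro h
    have h2 : (-1 : Quaternion ℝ) = 1 := congrArg Subtype.val h
    have h3 : (-1 : ℝ) = 1 := by simpa [Quaternion.re_one] using congrArg QuaternionAlgebra.re h2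
    norm_num at h3
  -- order of g is 4
  have hdvd : orderOf g ∣ 4 := orderOf_dvd_of_pow_eq_one hg4
  have hnd : ¬ orderOf g ∣ 2 := fun h => hg2ne (orderOf_dvd_iff_pow_eq_one.1 h)
  have horder : orderOf g = 4 := by
    have hle : orderOf g ≤ 4 := Nat.le_of_dvd (by norm_num) hdvd
    interval_cases h : orderOf g <;> revert hdvd hnd <;> decide
  -- comap = zpowers g
  have hcomap : H.comap π = Subgroup.zpowers g := by
    apply le_antisymm
    · intro x hx
      have hxH : π x ∈ H := hx
      rcases hHmem ⟨π x, hxH⟩ with h | h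
      · have hx1 : π x = 1 := congrArg Subtype.val h
        rcases (hker' x).1 hx1 with rfl | rfl
        · exact Subgroup.one_mem _
        · exact ⟨2, by show g ^ (2:ℤ) = -1; rw [zpow_two, hg2]⟩
      · have hxk : π x = k := congrArg Subtype.val h
        have h1 : π (g⁻¹ * x) = 1 := by rw [map_mul, map_inv, hg, hxk, inv_mul_cancel]
        rcases (hker' _).1 h1 with h' | h'
        · have : x = g := (inv_mul_eq_one.1 h').symm
          exact this ▸ Subgroup.mem_zpowers g
        · have hx3 : x = g * (-1) := by
            rw [← h', ← mul_assoc, mul_inv_cancel, one_mul]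
          refine ⟨3, ?_⟩
          show g ^ (3:ℤ) = x
          rw [hx3, show (3:ℤ) = 2 + 1 by norm_num, zpow_add, zpow_two, zpow_one, hg2,
            neg_one_mul, mul_neg_one]
    · intro x hx
      rcases hx with ⟨n, rfl⟩
      show π (g ^ n) ∈ H
      rw [map_zpow, hg]
      exact Subgroup.zpow_mem H hkH n
  have hcyc : IsCyclic (Subgroup.zpowers g) := by
    refine ⟨⟨⟨g, Subgroup.mem_zpowers g⟩, ?_⟩⟩
    rintro ⟨x, n, rfl⟩
    exact ⟨n, Subtype.ext (by rw [SubgroupClass.coe_zpow])⟩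
  rw [hcomap]
  exact ⟨hcyc, by rw [Nat.card_zpowers, horder]⟩
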